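/- If dRSS(v_f, v_r) = 0 then v_r < v_f or v_r = v_f = 0, assuming b_min ≤ b_max, ρ > 0, a_max > 0, and v_f, v_r ≥ 0. -/

import Mathlib

/-- The RSS safety distance. -/
noncomputable def dRSS (ρR amax bmin bmax vf vr : ℝ) : ℝ :=
  max 0 (vr * ρR + (1/2) * amax * ρR ^ 2 + (vr + amax * ρR) ^ 2 / (2 * bmin)
    - vf ^ 2 / (2 * bmax))

/-- If `dRSS(vf, vr) = 0` (with `bmin ≤ bmax`, `ρ > 0`, `amax > 0`,
`vf, vr ≥ 0`) then `vr < vf` or `vr = vf = 0`. -/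
theorem dRSS_eq_zero (ρR amax bmin bmax vf vr : ℝ)
    (hρ : 0 < ρR) (ha : 0 < amax) (hbmin : 0 < bmin) (hbmax : 0 < bmax)
    (hbb : bmin ≤ bmax) (hvf : 0 ≤ vf) (hvr : 0 ≤ vr)
    (h0 : dRSS ρR amax bmin bmax vf vr = 0) :
    vr < vf ∨ (vr = vf ∧ vf = 0) := by
  unfold dRSS at h0
  rw [max_eq_left_iff] at h0
  have hX : (vr * ρR + (1/2) * amax * ρR ^ 2) * (2 * bmin * bmax)
      + (vr + amax * ρR) ^ 2 * bmax ≤ vf ^ 2 * bmin := by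
    have h := mul_le_mul_of_nonneg_right h0 (by positivity : (0:ℝ) ≤ 2 * bmin * bmax)
    have e1 : (vr + amax * ρR) ^ 2 / (2 * bmin) * (2 * bmin * bmax)
        = (vr + amax * ρR) ^ 2 * bmax := by field_simp
    have e2 : vf ^ 2 / (2 * bmax) * (2 * bmin * bmax) = vf ^ 2 * bmin := by
      field_simp
    nlinarith [e1, e2]
  left
  by_contra hle
  push_neg at hle
  have h1 : vf ^ 2 ≤ vr ^ 2 := by nlinarith
  have h2 : vf ^ 2 * bmax ≤ vr ^ 2 * bmax := mul_le_mul_of_nonneg_right h1 hbmax.le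
  have h3 : vf ^ 2 * bmin ≤ vf ^ 2 * bmax := mul_le_mul_of_nonneg_left hbb (sq_nonneg vf)
  have h4 : vr ^ 2 * bmax < (vr + amax * ρR) ^ 2 * bmax := by
    apply mul_lt_mul_of_pos_right _ hbmax
    nlinarith [mul_pos ha hρ, mul_nonneg hvr (mul_pos ha hρ).le]
  nlinarith [mul_nonneg (mul_nonneg hvr hρ.le) (by positivity : (0:ℝ) ≤ 2*bmin*bmax),
    mul_pos (mul_pos (by positivity : (0:ℝ) < (1/2)*amax*ρR^2) hbmin) hbmax]
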